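/- Let p ∈ ℂ[X] be a monic polynomial of degree at least 1, and let A = ℂ[X]/(p). Then there exists a non-degenerate symmetric bilinear form B on A satisfying B(uv,w) = B(u,vw) for all u,v,w ∈ A. -/

import Mathlib

open Polynomial

/-- For any monic polynomial `p ∈ ℂ[X]` of degree at least `1`, there exists a
non-degenerate symmetric associative bilinear form on `A = ℂ[X]/(p)`. -/
theorem exists_nondegenerate_form (p : Polynomial ℂ) (hp : p.Monic)
    (hdeg : 1 ≤ p.natDegree) :
    ∃ B : (Polynomial ℂ ⧸ Ideal.span {p}) →ₗ[ℂ]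
        (Polynomial ℂ ⧸ Ideal.span {p}) →ₗ[ℂ] ℂ,
      (∀ u v, B u v = B v u)
      ∧ (∀ u v w, B (u * v) w = B u (v * w))
      ∧ (∀ u, (∀ v, B u v = 0) → u = 0) := by
  set n := p.natDegree with hn
  let L : AdjoinRoot p →ₗ[ℂ] ℂ :=
    (Polynomial.lcoeff ℂ (n - 1)).comp (AdjoinRoot.modByMonicHom hp)
  refine ⟨(LinearMap.mul ℂ (AdjoinRoot p)).compr₂ L, ?_, ?_, ?_⟩
  · intro u v
    show L (u * v) = L (v * u)
    rw [mul_comm]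
  · intro u v w
    show L (u * v * w) = L (u * (v * w))
    rw [mul_assoc]
  · intro u hu
    by_contra hne
    set q : Polynomial ℂ := AdjoinRoot.modByMonicHom hp u with hq
    have hqne : q ≠ 0 := by
      intro h
      apply hne
      have h2 := AdjoinRoot.mk_leftInverse hp u
      rw [← h2, show (AdjoinRoot.modByMonicHom hp) u = (0 : Polynomial ℂ) from h, map_zero]
      rfl
    have hqdeg : q.degree < p.degree := by
      obtain ⟨f, rfl⟩ := AdjoinRoot.mk_surjective u
      rw [hq, AdjoinRoot.modByMonicHom_mk]
      exact Polynomial.degree_modByMonic_lt f hp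
    set d := q.natDegree with hd
    have hdlt : d < n := by
      have := Polynomial.natDegree_lt_natDegree hqne hqdeg
      omega
    have hmu : u = AdjoinRoot.mk p q := (AdjoinRoot.mk_leftInverse hp u).symm
    have key : L (AdjoinRoot.mk p (q * X ^ (n - 1 - d))) = 0 := by
      have h0 := hu (AdjoinRoot.mk p (X ^ (n - 1 - d)))
      rw [hmu] at h0
      rw [map_mul]
      exact h0
    have hdeg2 : (q * X ^ (n - 1 - d)).degree < p.degree := by
      rcases le_or_gt p.degree (q * X ^ (n - 1 - d)).degree with h | h
      · exfalso
        have h1 : (q * X ^ (n - 1 - d)).natDegree = d + (n - 1 - d) := by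
          rw [Polynomial.natDegree_mul hqne (pow_ne_zero _ Polynomial.X_ne_zero), Polynomial.natDegree_X_pow]
        have h2 : p.natDegree ≤ (q * X ^ (n - 1 - d)).natDegree :=
          Polynomial.natDegree_le_natDegree h
        omega
      · exact h
    simp only [L, LinearMap.coe_comp, Function.comp_apply, AdjoinRoot.modByMonicHom_mk,
      (Polynomial.modByMonic_eq_self_iff hp).2 hdeg2, Polynomial.lcoeff_apply] at key
    have hc : (q * X ^ (n - 1 - d)).coeff (n - 1) = q.leadingCoeff := by
      rw [Polynomial.coeff_mul_X_pow']
      simp only [if_pos (by omega : n - 1 - d ≤ n - 1)]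
      have : n - 1 - (n - 1 - d) = d := by omega
      rw [this, Polynomial.leadingCoeff]
    rw [hc] at key
    exact hqne (Polynomial.leadingCoeff_eq_zero.mp key)
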